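/- Let V, W, Z be finite-dimensional real vector spaces equipped with generalized complex structures, and let Γ ⊆ V ⊕ W and Φ ⊆ W ⊕ Z be subspaces. If Γ and Φ are generalized Lagrangian with respect to the twisted product structures on V ⊕ W and W ⊕ Z respectively, then the composition Φ∘Γ = {(v,z) ∈ V ⊕ Z : ∃ w ∈ W with (v,w) ∈ Γ and (w,z) ∈ Φ} is a generalized Lagrangian subspace of V ⊕ Z with respect to the twisted product structure. -/

import Mathlib

open Module LinearMap

noncomputable def gcPair (V : Type*) [AddCommGroup V] [Module ℝ V]
    (x y : V × Module.Dual ℝ V) : ℝ :=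
  -(1/2) * (x.2 y.1 + y.2 x.1)

noncomputable def IsGCS (V : Type*) [AddCommGroup V] [Module ℝ V]
    (J : (V × Module.Dual ℝ V) →ₗ[ℝ] (V × Module.Dual ℝ V)) : Prop :=
  J ∘ₗ J = -LinearMap.id ∧ ∀ x y, gcPair V (J x) (J y) = gcPair V x y

section Blocks

variable (V : Type*) [AddCommGroup V] [Module ℝ V]

noncomputable def blk1 (J : (V × Module.Dual ℝ V) →ₗ[ℝ] (V × Module.Dual ℝ V)) :
    V →ₗ[ℝ] V :=
  (LinearMap.fst ℝ V (Module.Dual ℝ V)) ∘ₗ J ∘ₗ (LinearMap.inl ℝ V (Module.Dual ℝ V))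

noncomputable def blk2 (J : (V × Module.Dual ℝ V) →ₗ[ℝ] (V × Module.Dual ℝ V)) :
    Module.Dual ℝ V →ₗ[ℝ] V :=
  (LinearMap.fst ℝ V (Module.Dual ℝ V)) ∘ₗ J ∘ₗ (LinearMap.inr ℝ V (Module.Dual ℝ V))

noncomputable def blk3 (J : (V × Module.Dual ℝ V) →ₗ[ℝ] (V × Module.Dual ℝ V)) :
    V →ₗ[ℝ] Module.Dual ℝ V :=
  (LinearMap.snd ℝ V (Module.Dual ℝ V)) ∘ₗ J ∘ₗ (LinearMap.inl ℝ V (Module.Dual ℝ V))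

noncomputable def blk4 (J : (V × Module.Dual ℝ V) →ₗ[ℝ] (V × Module.Dual ℝ V)) :
    Module.Dual ℝ V →ₗ[ℝ] Module.Dual ℝ V :=
  (LinearMap.snd ℝ V (Module.Dual ℝ V)) ∘ₗ J ∘ₗ (LinearMap.inr ℝ V (Module.Dual ℝ V))

noncomputable def ofBlocks (A : V →ₗ[ℝ] V) (B : Module.Dual ℝ V →ₗ[ℝ] V)
    (C : V →ₗ[ℝ] Module.Dual ℝ V) (D : Module.Dual ℝ V →ₗ[ℝ] Module.Dual ℝ V) :
    (V × Module.Dual ℝ V) →ₗ[ℝ] (V × Module.Dual ℝ V) :=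
  LinearMap.prod
    (A ∘ₗ LinearMap.fst ℝ V (Module.Dual ℝ V) + B ∘ₗ LinearMap.snd ℝ V (Module.Dual ℝ V))
    (C ∘ₗ LinearMap.fst ℝ V (Module.Dual ℝ V) + D ∘ₗ LinearMap.snd ℝ V (Module.Dual ℝ V))

/-- The twist `𝓙̃ = [[𝓙₁,-𝓙₂],[-𝓙₃,𝓙₄]]` of `𝓙`. -/
noncomputable def gcTwist (J : (V × Module.Dual ℝ V) →ₗ[ℝ] (V × Module.Dual ℝ V)) :
    (V × Module.Dual ℝ V) →ₗ[ℝ] (V × Module.Dual ℝ V) :=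
  ofBlocks V (blk1 V J) (-(blk2 V J)) (-(blk3 V J)) (blk4 V J)

end Blocks

section Prod

variable (U V : Type*) [AddCommGroup U] [Module ℝ U] [AddCommGroup V] [Module ℝ V]

/-- The natural identification `(U⊕V) ⊕ (U⊕V)* ≅ (U ⊕ U*) ⊕ (V ⊕ V*)`. -/
noncomputable def prodPack :
    ((U × V) × Module.Dual ℝ (U × V)) ≃ₗ[ℝ]
      (U × Module.Dual ℝ U) × (V × Module.Dual ℝ V) :=
  ((LinearEquiv.refl ℝ (U × V)).prodCongr (Module.dualProdDualEquivDual ℝ U V).symm).trans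
    (LinearEquiv.prodProdProdComm ℝ U V (Module.Dual ℝ U) (Module.Dual ℝ V))

/-- The direct sum of the structures `J_U` and `J_V` on `U ⊕ V`. -/
noncomputable def directSum
    (JU : (U × Module.Dual ℝ U) →ₗ[ℝ] (U × Module.Dual ℝ U))
    (JV : (V × Module.Dual ℝ V) →ₗ[ℝ] (V × Module.Dual ℝ V)) :
    ((U × V) × Module.Dual ℝ (U × V)) →ₗ[ℝ] ((U × V) × Module.Dual ℝ (U × V)) :=
  (prodPack U V).symm.toLinearMap ∘ₗ (LinearMap.prodMap JU JV) ∘ₗ (prodPack U V).toLinearMap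

/-- The twisted product structure on `U ⊕ V`: the direct sum of `𝓙̃_U` and `𝓙_V`. -/
noncomputable def twistedProd
    (JU : (U × Module.Dual ℝ U) →ₗ[ℝ] (U × Module.Dual ℝ U))
    (JV : (V × Module.Dual ℝ V) →ₗ[ℝ] (V × Module.Dual ℝ V)) :
    ((U × V) × Module.Dual ℝ (U × V)) →ₗ[ℝ] ((U × V) × Module.Dual ℝ (U × V)) :=
  directSum U V (gcTwist U JU) JV

end Prod

section Subspaces

variable {X : Type*} [AddCommGroup X] [Module ℝ X]

/-- A subspace `Γ` of a GC vector space `(X, J)` is generalized isotropic if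
`J(Γ ⊕ 0) ⊆ Γ ⊕ Ann(Γ)`. -/
def GenIsotropic (J : (X × Module.Dual ℝ X) →ₗ[ℝ] (X × Module.Dual ℝ X))
    (Γ : Submodule ℝ X) : Prop :=
  ∀ x ∈ Γ, J (x, 0) ∈ Γ.prod Γ.dualAnnihilator

/-- A subspace `Γ` of a GC vector space `(X, J)` is generalized coisotropic if
`J(0 ⊕ Ann(Γ)) ⊆ Γ ⊕ Ann(Γ)`. -/
def GenCoisotropic (J : (X × Module.Dual ℝ X) →ₗ[ℝ] (X × Module.Dual ℝ X))
    (Γ : Submodule ℝ X) : Prop :=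
  ∀ f ∈ Γ.dualAnnihilator, J (0, f) ∈ Γ.prod Γ.dualAnnihilator

/-- A subspace `Γ` of a GC vector space `(X, J)` is generalized Lagrangian if
`Γ ⊕ Ann(Γ)` is stable under `J`. -/
def GenLagrangian (J : (X × Module.Dual ℝ X) →ₗ[ℝ] (X × Module.Dual ℝ X))
    (Γ : Submodule ℝ X) : Prop :=
  ∀ p ∈ Γ.prod Γ.dualAnnihilator, J p ∈ Γ.prod Γ.dualAnnihilator

end Subspaces

section Comp

variable {V W Z : Type*} [AddCommGroup V] [Module ℝ V] [AddCommGroup W] [Module ℝ W]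
  [AddCommGroup Z] [Module ℝ Z]

/-- The composition `Φ∘Γ = {(v,z) : ∃ w, (v,w) ∈ Γ ∧ (w,z) ∈ Φ}` of linear relations. -/
def relComp (Γ : Submodule ℝ (V × W)) (Φ : Submodule ℝ (W × Z)) : Submodule ℝ (V × Z) where
  carrier := {p | ∃ w : W, (p.1, w) ∈ Γ ∧ (w, p.2) ∈ Φ}
  add_mem' := by
    rintro ⟨a, c⟩ ⟨a', c'⟩ ⟨w, h1, h2⟩ ⟨w', h1', h2'⟩
    exact ⟨w + w', Γ.add_mem h1 h1', Φ.add_mem h2 h2'⟩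
  zero_mem' := ⟨0, Γ.zero_mem, Φ.zero_mem⟩
  smul_mem' := by
    rintro r ⟨a, c⟩ ⟨w, h1, h2⟩
    exact ⟨r • w, Γ.smul_mem r h1, Φ.smul_mem r h2⟩

end Comp


section AuxLemmas

variable {V W Z : Type*} [AddCommGroup V] [Module ℝ V] [AddCommGroup W] [Module ℝ W]
  [AddCommGroup Z] [Module ℝ Z]

lemma pk_mem_ann_iff (Γ : Submodule ℝ (V × W)) (φ : Module.Dual ℝ V) (ψ : Module.Dual ℝ W) :
    Module.dualProdDualEquivDual ℝ V W (φ, ψ) ∈ Γ.dualAnnihilator ↔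
      ∀ p ∈ Γ, φ p.1 + ψ p.2 = 0 := by
  rw [Submodule.mem_dualAnnihilator]
  simp [Module.dualProdDualEquivDual]

lemma gcTwist_apply_eq (J : (V × Module.Dual ℝ V) →ₗ[ℝ] (V × Module.Dual ℝ V))
    (x : V) (f : Module.Dual ℝ V) :
    gcTwist V J (x, f) = ((J (x, -f)).1, -(J (x, -f)).2) := by
  have h : J (x, -f) = J (x, 0) - J (0, f) := by
    rw [← map_sub]; norm_num
  simp only [gcTwist, ofBlocks, blk1, blk2, blk3, blk4, h, Prod.ext_iff,
    LinearMap.prod_apply, Pi.prod, Function.prod_apply, LinearMap.add_apply, LinearMap.comp_apply,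
    LinearMap.fst_apply, LinearMap.snd_apply, LinearMap.inl_apply, LinearMap.inr_apply,
    LinearMap.neg_apply, Prod.fst_sub, Prod.snd_sub, neg_sub]
  constructor <;> abel

lemma twistedProd_apply' (JV : (V × Module.Dual ℝ V) →ₗ[ℝ] (V × Module.Dual ℝ V))
    (JW : (W × Module.Dual ℝ W) →ₗ[ℝ] (W × Module.Dual ℝ W))
    (v : V) (w : W) (φ : Module.Dual ℝ V) (ψ : Module.Dual ℝ W) :
    twistedProd V W JV JW ((v, w), Module.dualProdDualEquivDual ℝ V W (φ, ψ)) =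
      (((gcTwist V JV (v, φ)).1, (JW (w, ψ)).1),
        Module.dualProdDualEquivDual ℝ V W ((gcTwist V JV (v, φ)).2, (JW (w, ψ)).2)) := by
  have hpackG : ∀ (x : V) (y : W) (f : Module.Dual ℝ V) (g : Module.Dual ℝ W),
      prodPack V W ((x, y), Module.dualProdDualEquivDual ℝ V W (f, g))
        = ((x, f), (y, g)) := by
    intro x y f g
    simp [prodPack, LinearEquiv.prodProdProdComm]
    rfl
  have hpack := hpackG v w φ ψ
  have hpack2 : ∀ (a : V × Module.Dual ℝ V) (b : W × Module.Dual ℝ W),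
      (prodPack V W).symm (a, b)
        = ((a.1, b.1), Module.dualProdDualEquivDual ℝ V W (a.2, b.2)) := by
    intro a b
    rw [LinearEquiv.symm_apply_eq, hpackG]
  simp only [twistedProd, directSum, LinearMap.comp_apply, LinearEquiv.coe_coe, hpack,
    LinearMap.prodMap_apply, hpack2]

lemma ann_relComp [FiniteDimensional ℝ V] [FiniteDimensional ℝ W] [FiniteDimensional ℝ Z]
    (Γ : Submodule ℝ (V × W)) (Φ : Submodule ℝ (W × Z))
    (φ : Module.Dual ℝ V) (ζ : Module.Dual ℝ Z)
    (h : ∀ p ∈ relComp Γ Φ, φ p.1 + ζ p.2 = 0) :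
    ∃ ψ : Module.Dual ℝ W, (∀ p ∈ Γ, φ p.1 + ψ p.2 = 0) ∧
      (∀ q ∈ Φ, -ψ q.1 + ζ q.2 = 0) := by
  set Γ' : Submodule ℝ ((V × W) × Z) := Γ.comap (LinearMap.fst ℝ (V × W) Z) with hΓ'
  set Φ' : Submodule ℝ ((V × W) × Z) :=
    Φ.comap ((LinearMap.snd ℝ V W).prodMap LinearMap.id) with hΦ'
  set G : Module.Dual ℝ ((V × W) × Z) :=
    φ ∘ₗ LinearMap.fst ℝ V W ∘ₗ LinearMap.fst ℝ (V × W) Z + ζ ∘ₗ LinearMap.snd ℝ (V × W) Z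
    with hG
  have hGmem : G ∈ (Γ' ⊓ Φ').dualAnnihilator := by
    rw [Submodule.mem_dualAnnihilator]
    rintro ⟨⟨v, w⟩, z⟩ ⟨h1, h2⟩
    exact h (v, z) ⟨w, h1, h2⟩
  rw [Subspace.dualAnnihilator_inf_eq, Submodule.mem_sup] at hGmem
  obtain ⟨G₁, hG₁, G₂, hG₂, hsum⟩ := hGmem
  rw [Submodule.mem_dualAnnihilator] at hG₁ hG₂
  refine ⟨G₁ ∘ₗ LinearMap.inl ℝ (V × W) Z ∘ₗ LinearMap.inr ℝ V W, ?_, ?_⟩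
  · rintro ⟨v, w⟩ hvw
    have e1 : G₂ ((v, 0), 0) = 0 := hG₂ _ (by simp [hΦ', Prod.mk_zero_zero])
    have e2 : G₁ ((v, 0), 0) + G₂ ((v, 0), 0) = G ((v, 0), 0) :=
      DFunLike.congr_fun hsum ((v, 0), 0)
    have e3 : G ((v, 0), 0) = φ v := by simp [hG]
    have e4 : G₁ ((v, w), 0) = 0 := hG₁ _ (by simpa [hΓ'] using hvw)
    have e5 : ((v, 0), (0 : Z)) + ((0, w), 0) = (((v, w), 0) : (V × W) × Z) := by simp
    have e6 : G₁ ((v, 0), 0) + G₁ ((0, w), 0) = G₁ ((v, w), 0) := by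
      rw [← map_add, e5]
    simp only [LinearMap.comp_apply, LinearMap.inl_apply, LinearMap.inr_apply]
    rw [show φ v = G₁ ((v, 0), 0) by rw [← e3, ← e2, e1, add_zero]]
    rw [e6, e4]
  · rintro ⟨w, z⟩ hwz
    have f1 : G₁ ((0, 0), z) = 0 := hG₁ _ (by simp [hΓ', Prod.mk_zero_zero])
    have f2 : G₁ ((0, 0), z) + G₂ ((0, 0), z) = G ((0, 0), z) :=
      DFunLike.congr_fun hsum ((0, 0), z)
    have f3 : G ((0, 0), z) = ζ z := by simp [hG]
    have f4 : G₁ ((0, w), 0) + G₂ ((0, w), 0) = G ((0, w), 0) :=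
      DFunLike.congr_fun hsum ((0, w), 0)
    have f5 : G ((0, w), 0) = 0 := by simp [hG]
    have f6 : G₂ ((0, w), z) = 0 := hG₂ _ (by simpa [hΦ'] using hwz)
    have f7 : ((0, w), (0 : Z)) + ((0, 0), z) = (((0, w), z) : (V × W) × Z) := by simp
    have f8 : G₂ ((0, w), 0) + G₂ ((0, 0), z) = G₂ ((0, w), z) := by
      rw [← map_add, f7]
    simp only [LinearMap.comp_apply, LinearMap.inl_apply, LinearMap.inr_apply]
    have : G₁ ((0, w), 0) = -G₂ ((0, w), 0) := by linarith [f4, f5]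
    rw [this]
    have : G₂ ((0, 0), z) = ζ z := by rw [← f3, ← f2, f1, zero_add]
    linarith [f8, f6, this]

end AuxLemmas

theorem relComp_genLagrangian
    (V W Z : Type*) [AddCommGroup V] [Module ℝ V] [FiniteDimensional ℝ V]
    [AddCommGroup W] [Module ℝ W] [FiniteDimensional ℝ W]
    [AddCommGroup Z] [Module ℝ Z] [FiniteDimensional ℝ Z]
    (JV : (V × Module.Dual ℝ V) →ₗ[ℝ] (V × Module.Dual ℝ V))
    (JW : (W × Module.Dual ℝ W) →ₗ[ℝ] (W × Module.Dual ℝ W))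
    (JZ : (Z × Module.Dual ℝ Z) →ₗ[ℝ] (Z × Module.Dual ℝ Z))
    (hJV : IsGCS V JV) (hJW : IsGCS W JW) (hJZ : IsGCS Z JZ)
    (Γ : Submodule ℝ (V × W)) (Φ : Submodule ℝ (W × Z))
    (hΓ : GenLagrangian (twistedProd V W JV JW) Γ)
    (hΦ : GenLagrangian (twistedProd W Z JW JZ) Φ) :
    GenLagrangian (twistedProd V Z JV JZ) (relComp Γ Φ) := by
  rintro ⟨⟨v, z⟩, F⟩ hmem
  obtain ⟨⟨φ, ζ⟩, rfl⟩ := (Module.dualProdDualEquivDual ℝ V Z).surjective F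
  obtain ⟨hvz, hF⟩ := hmem
  simp only [SetLike.mem_coe] at hvz hF
  rw [pk_mem_ann_iff] at hF
  obtain ⟨w, hw1, hw2⟩ := hvz
  obtain ⟨ψ, hψ1, hψ2⟩ := ann_relComp Γ Φ φ ζ hF
  -- apply hΓ
  have hΓ' := hΓ ((v, w), Module.dualProdDualEquivDual ℝ V W (φ, ψ))
    ⟨hw1, (pk_mem_ann_iff Γ φ ψ).2 hψ1⟩
  rw [twistedProd_apply'] at hΓ'
  obtain ⟨hΓm, hΓa⟩ := hΓ'
  simp only [SetLike.mem_coe] at hΓm hΓa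
  rw [pk_mem_ann_iff] at hΓa
  -- apply hΦ
  have hΦ' := hΦ ((w, z), Module.dualProdDualEquivDual ℝ W Z (-ψ, ζ))
    ⟨hw2, (pk_mem_ann_iff Φ (-ψ) ζ).2 hψ2⟩
  rw [twistedProd_apply'] at hΦ'
  rw [gcTwist_apply_eq, neg_neg] at hΦ'
  obtain ⟨hΦm, hΦa⟩ := hΦ'
  simp only [SetLike.mem_coe] at hΦm hΦa
  rw [pk_mem_ann_iff] at hΦa
  -- conclude
  rw [twistedProd_apply']
  refine Submodule.mem_prod.2 ⟨⟨(JW (w, ψ)).1, ?_, ?_⟩, ?_⟩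
  · exact hΓm
  · exact hΦm
  · dsimp only
    rw [pk_mem_ann_iff]
    rintro ⟨a, c⟩ ⟨b, hab, hbc⟩
    have h1 := hΓa (a, b) hab
    have h2 := hΦa (b, c) hbc
    simp only at h1 h2 ⊢
    simp only [LinearMap.neg_apply] at h2
    linarith
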